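/- For every integer s ≥ 2, the chain [2^s, 3, 2^{s−2}, s+3, s+2] (s entries 2, then a 3, then s−2 entries 2, then entries s+3 and s+2, of length r = 2s+1) has Hirzebruch–Jung continued fraction (s²+3s+1)² / ((s²+3s+1)·s(s+2) − 1); hence it is a T-chain with parameters (d, n, a) = (1, s²+3s+1, s(s+2)), and it satisfies r − d = 2s. (These are the T-chains occurring in the surfaces attaining the optimal bounds of the paper's classification theorems for Kodaira dimension 0 and 1.) -/

import Mathlib

/-- Hirzebruch–Jung continued fraction of a list of integers:
`hjcf [] = 0` (junk value), `hjcf (b :: l) = b - 1 / hjcf l`.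
Since `(0 : ℚ)⁻¹ = 0`, this gives `hjcf [b] = b`, matching the recursion
`[b_r] = b_r`, `[b_1, …, b_r] = b_1 − 1/[b_2, …, b_r]`. -/
def hjcf : List ℤ → ℚ
  | [] => 0
  | b :: l => (b : ℚ) - (hjcf l)⁻¹

/-- `IsTChain l d n a` : the nonempty list `l` of integers, all ≥ 2, is a T-chain
with parameters `(d, n, a)`, i.e. its Hirzebruch–Jung continued fraction equals
`d n² / (d n a − 1)` where `d ≥ 1`, `n ≥ 2`, `0 < a < n`, `gcd(n, a) = 1`. -/
def IsTChain (l : List ℤ) (d n a : ℤ) : Prop :=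
  l ≠ [] ∧ (∀ b ∈ l, 2 ≤ b) ∧
  1 ≤ d ∧ 2 ≤ n ∧ 0 < a ∧ a < n ∧ Int.gcd n a = 1 ∧
  hjcf l = (d * n ^ 2 : ℚ) / (d * n * a - 1)

lemma hjcf_cons (b : ℤ) (l : List ℤ) : hjcf (b :: l) = (b : ℚ) - (hjcf l)⁻¹ := rfl

lemma hjcf_cons' (b : ℤ) (l : List ℤ) (p q : ℚ) (hq : 0 < q) (hpq : q < p)
    (h : hjcf l = p / q) : hjcf (b :: l) = ((b : ℚ) * p - q) / p := by
  have hp : p ≠ 0 := by linarith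
  have hq' : q ≠ 0 := ne_of_gt hq
  rw [hjcf_cons, h]
  field_simp

lemma hjcf_rep (k : ℕ) (l : List ℤ) (p q : ℚ) (hq : 0 < q) (hpq : q < p)
    (h : hjcf l = p / q) :
    hjcf (List.replicate k 2 ++ l)
      = (((k : ℚ) + 1) * p - (k : ℚ) * q) / ((k : ℚ) * p - ((k : ℚ) - 1) * q) := by
  induction k with
  | zero =>
    simp only [List.replicate_zero, List.nil_append, Nat.cast_zero]
    rw [h]; congr 1 <;> ring
  | succ n ih =>
    have hk0 : (0:ℚ) ≤ (n:ℚ) := Nat.cast_nonneg n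
    have hqn : 0 < (n:ℚ) * p - ((n:ℚ) - 1) * q := by nlinarith
    have hpn : (n:ℚ) * p - ((n:ℚ) - 1) * q < ((n:ℚ) + 1) * p - (n:ℚ) * q := by nlinarith
    have step := hjcf_cons' 2 (List.replicate n 2 ++ l) _ _ hqn hpn ih
    have hrep : List.replicate (n+1) (2:ℤ) ++ l = (2:ℤ) :: (List.replicate n 2 ++ l) := rfl
    rw [hrep, step]
    push_cast
    congr 1 <;> ring

/-- For s ≥ 2, the chain [2^s, 3, 2^{s−2}, s+3, s+2] of length
r = 2s+1 has HJ continued fraction (s²+3s+1)² / ((s²+3s+1)·s(s+2) − 1), hence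
is a T-chain with parameters (1, s²+3s+1, s(s+2)), and r − d = 2s. -/
theorem optimal_chain_typeII (s : ℕ) (hs : 2 ≤ s) :
    let c : List ℤ := List.replicate s 2 ++ 3 ::
      (List.replicate (s - 2) 2 ++ [(s : ℤ) + 3, (s : ℤ) + 2])
    c.length = 2 * s + 1 ∧
    hjcf c = ((s : ℚ) ^ 2 + 3 * s + 1) ^ 2 /
      (((s : ℚ) ^ 2 + 3 * s + 1) * ((s : ℚ) * ((s : ℚ) + 2)) - 1) ∧
    IsTChain c 1 ((s : ℤ) ^ 2 + 3 * s + 1) ((s : ℤ) * ((s : ℤ) + 2)) ∧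
    (c.length : ℤ) - 1 = 2 * s := by
  obtain ⟨m, rfl⟩ : ∃ m, s = m + 2 := ⟨s - 2, by omega⟩
  intro c
  have hc : c = List.replicate (m + 2) (2:ℤ) ++ (3:ℤ) ::
      (List.replicate (m + 2 - 2) (2:ℤ) ++
        [((m + 2 : ℕ) : ℤ) + 3, ((m + 2 : ℕ) : ℤ) + 2]) := rfl
  rw [Nat.add_sub_cancel] at hc
  have hM : (0:ℚ) ≤ (m:ℚ) := Nat.cast_nonneg m
  -- tail
  have h4 : (0:ℚ) < (m:ℚ) + 4 := by positivity
  have h0 : hjcf [((m + 2 : ℕ) : ℤ) + 3, ((m + 2 : ℕ) : ℤ) + 2]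
      = ((m:ℚ)^2 + 9*m + 19) / ((m:ℚ) + 4) := by
    simp only [hjcf]
    push_cast
    rw [inv_zero, sub_zero]
    have h4' : (m:ℚ) + 4 ≠ 0 := ne_of_gt h4
    field_simp
    ring
  have i0 : (m:ℚ) + 4 < (m:ℚ)^2 + 9*m + 19 := by nlinarith
  have h1 := hjcf_rep m _ _ _ h4 i0 h0
  have h1' : hjcf (List.replicate m 2 ++ [((m + 2 : ℕ) : ℤ) + 3, ((m + 2 : ℕ) : ℤ) + 2])
      = ((m:ℚ)^3 + 9*m^2 + 24*m + 19) / ((m:ℚ)^3 + 8*m^2 + 16*m + 4) := by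
    rw [h1]; congr 1 <;> ring
  have i1q : (0:ℚ) < (m:ℚ)^3 + 8*m^2 + 16*m + 4 := by positivity
  have i1 : (m:ℚ)^3 + 8*m^2 + 16*m + 4 < (m:ℚ)^3 + 9*m^2 + 24*m + 19 := by nlinarith
  have h2 := hjcf_cons' 3 _ _ _ i1q i1 h1'
  have h2' : hjcf ((3:ℤ) :: (List.replicate m 2 ++ [((m + 2 : ℕ) : ℤ) + 3, ((m + 2 : ℕ) : ℤ) + 2]))
      = (2*(m:ℚ)^3 + 19*m^2 + 56*m + 53) / ((m:ℚ)^3 + 9*m^2 + 24*m + 19) := by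
    rw [h2]; congr 1 <;> ring
  have i2q : (0:ℚ) < (m:ℚ)^3 + 9*m^2 + 24*m + 19 := by positivity
  have i2 : (m:ℚ)^3 + 9*m^2 + 24*m + 19 < 2*(m:ℚ)^3 + 19*m^2 + 56*m + 53 := by nlinarith
  have h3 := hjcf_rep (m + 2) _ _ _ i2q i2 h2'
  have hfinal : hjcf c = (((m:ℚ)+2)^2 + 3*((m:ℚ)+2) + 1)^2 /
      ((((m:ℚ)+2)^2 + 3*((m:ℚ)+2) + 1) * (((m:ℚ)+2) * (((m:ℚ)+2) + 2)) - 1) := by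
    rw [hc, h3]
    have hq3 : (0:ℚ) < ((m+2 : ℕ):ℚ) * (2*(m:ℚ)^3 + 19*m^2 + 56*m + 53)
        - (((m+2 : ℕ):ℚ) - 1) * ((m:ℚ)^3 + 9*m^2 + 24*m + 19) := by
      push_cast; nlinarith
    have hD : (0:ℚ) < (((m:ℚ)+2)^2 + 3*((m:ℚ)+2) + 1) * (((m:ℚ)+2) * (((m:ℚ)+2) + 2)) - 1 := by
      nlinarith
    rw [div_eq_div_iff (ne_of_gt hq3) (ne_of_gt hD)]
    push_cast
    ring
  refine ⟨?_, ?_, ?_, ?_⟩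
  · rw [hc]; simp [List.length_append, List.length_replicate]; omega
  · rw [hfinal]; push_cast; ring
  · refine ⟨?_, ?_, le_refl 1, ?_, ?_, ?_, ?_, ?_⟩
    · rw [hc]; simp
    · intro b hb
      rw [hc] at hb
      simp only [List.mem_append, List.mem_cons, List.mem_replicate, List.mem_singleton,
        List.not_mem_nil, or_false] at hb
      have hm' : (0:ℤ) ≤ (m:ℤ) := Int.natCast_nonneg m
      rcases hb with ⟨-, rfl⟩ | rfl | ⟨-, rfl⟩ | rfl | rfl <;> push_cast <;> omega
    · have : (0:ℤ) ≤ (m:ℤ) := Int.natCast_nonneg m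
      push_cast; nlinarith
    · have : (0:ℤ) ≤ (m:ℤ) := Int.natCast_nonneg m
      push_cast; nlinarith
    · have : (0:ℤ) ≤ (m:ℤ) := Int.natCast_nonneg m
      push_cast; nlinarith
    · rw [← Int.isCoprime_iff_gcd_eq_one]
      exact ⟨((m+2 : ℕ):ℤ)^2 + 3*((m+2 : ℕ):ℤ) + 1,
        ((m+2 : ℕ):ℤ) * (((m+2 : ℕ):ℤ) + 2) - 2*(((m+2 : ℕ):ℤ)^2 + 3*((m+2 : ℕ):ℤ) + 1) - 1,
        by push_cast; ring⟩
    · rw [hfinal]; push_cast; ring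
  · rw [hc]; simp [List.length_append, List.length_replicate]; push_cast; omega
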